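/- arXiv:2004.06439 — 3 statements merged into one kernel-verified Lean document; each statement's English description precedes it below -/
import Mathlib

section
/- Let B be a real symmetric 2^N × 2^N matrix with rows and columns indexed by {0,1}^N, and let A_1,…,A_N be real matrices with A_i of size m_i × n_i. Let C = B̃ ∘ (Â_1 ⊗ ⋯ ⊗ Â_N) be the matrix composition (where B̃(a,b) = B(ã,b̃) and ã_i = 1 iff a_i > m_i, and Â_i = [[‖A_i‖I, A_i],[A_iᵀ, ‖A_i‖I]]). Then ‖C‖ ≤ ‖B‖ · ∏_{i=1}^N ‖A_i‖. -/
open Matrix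

/-- The spectral norm (largest singular value) of a real matrix. -/
noncomputable def matSpectralNorm {m n : Type*} [Fintype m] [Fintype n] [DecidableEq n]
    (A : Matrix m n ℝ) : ℝ :=
  ‖LinearMap.toContinuousLinearMap (Matrix.toEuclideanLin A)‖

/-- `hatMatrix A = [[‖A‖·I, A], [Aᵀ, ‖A‖·I]]`. -/
noncomputable def hatMatrix {m n : ℕ} (A : Matrix (Fin m) (Fin n) ℝ) :
    Matrix (Fin m ⊕ Fin n) (Fin m ⊕ Fin n) ℝ :=
  Matrix.fromBlocks (matSpectralNorm A • (1 : Matrix (Fin m) (Fin m) ℝ)) A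
    Aᵀ (matSpectralNorm A • (1 : Matrix (Fin n) (Fin n) ℝ))

/-- The matrix composition `C = B̃ ∘ (Â_1 ⊗ ⋯ ⊗ Â_N)`: rows and columns are indexed by tuples
`a` with `a i ∈ Fin (m i) ⊕ Fin (n i)`; `ã i = 1` iff `a i` lies in the second summand, and
`C a b = B ã b̃ · ∏ i, Â_i (a i) (b i)`. -/
noncomputable def matrixComposition {N : ℕ} {m n : Fin N → ℕ}
    (B : Matrix (Fin N → Bool) (Fin N → Bool) ℝ)
    (A : ∀ i, Matrix (Fin (m i)) (Fin (n i)) ℝ) :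
    Matrix (∀ i, Fin (m i) ⊕ Fin (n i)) (∀ i, Fin (m i) ⊕ Fin (n i)) ℝ :=
  Matrix.of fun a b =>
    B (fun i => (a i).isRight) (fun i => (b i).isRight) * ∏ i, hatMatrix (A i) (a i) (b i)

section aux

variable {ι κ : Type*} [Fintype ι] [Fintype κ] [DecidableEq κ]

/-- The bilinear form of a matrix is bounded by its spectral norm. -/
lemma quad_abs_le (M : Matrix ι κ ℝ) (x : ι → ℝ) (y : κ → ℝ) :
    |∑ a, ∑ b, x a * M a b * y b| ≤
      matSpectralNorm M * Real.sqrt (∑ a, x a ^ 2) * Real.sqrt (∑ b, y b ^ 2) := by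
  set T := LinearMap.toContinuousLinearMap (Matrix.toEuclideanLin M) with hT
  set x' : EuclideanSpace ℝ ι := (WithLp.equiv 2 (ι → ℝ)).symm x with hx'
  set y' : EuclideanSpace ℝ κ := (WithLp.equiv 2 (κ → ℝ)).symm y with hy'
  have h1 : (inner ℝ x' (T y') : ℝ) = ∑ a, ∑ b, x a * M a b * y b := by
    simp only [hT, LinearMap.coe_toContinuousLinearMap', Matrix.toEuclideanLin_apply,
      PiLp.inner_apply, RCLike.inner_apply, starRingEnd_apply, star_trivial]
    refine Finset.sum_congr rfl fun a _ => ?_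
    simp only [hx', hy', WithLp.equiv_symm_apply, WithLp.ofLp_toLp,
      Matrix.mulVec, dotProduct, Finset.mul_sum, Finset.sum_mul]
    exact Finset.sum_congr rfl fun b _ => by ring
  have h2 : ‖x'‖ = Real.sqrt (∑ a, x a ^ 2) := by
    rw [EuclideanSpace.norm_eq]
    congr 1
    exact Finset.sum_congr rfl fun a _ => by
      simp [hx', WithLp.equiv_symm_apply, PiLp.toLp_apply, Real.norm_eq_abs, sq_abs]
  have h3 : ‖y'‖ = Real.sqrt (∑ b, y b ^ 2) := by
    rw [EuclideanSpace.norm_eq]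
    congr 1
    exact Finset.sum_congr rfl fun b _ => by
      simp [hy', WithLp.equiv_symm_apply, PiLp.toLp_apply, Real.norm_eq_abs, sq_abs]
  calc |∑ a, ∑ b, x a * M a b * y b| = |(inner ℝ x' (T y') : ℝ)| := by rw [h1]
    _ ≤ ‖x'‖ * ‖T y'‖ := abs_real_inner_le_norm _ _
    _ ≤ ‖x'‖ * (‖T‖ * ‖y'‖) :=
        mul_le_mul_of_nonneg_left (T.le_opNorm y') (norm_nonneg _)
    _ = matSpectralNorm M * Real.sqrt (∑ a, x a ^ 2) * Real.sqrt (∑ b, y b ^ 2) := by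
        rw [h2, h3, matSpectralNorm]; ring

/-- A bound on the bilinear form gives a bound on the spectral norm. -/
lemma spectralNorm_le_of (M : Matrix ι κ ℝ) {c : ℝ} (hc : 0 ≤ c)
    (h : ∀ (x : ι → ℝ) (y : κ → ℝ), ∑ a, ∑ b, x a * M a b * y b ≤
      c * Real.sqrt (∑ a, x a ^ 2) * Real.sqrt (∑ b, y b ^ 2)) :
    matSpectralNorm M ≤ c := by
  refine ContinuousLinearMap.opNorm_le_bound _ hc fun v => ?_
  set T := LinearMap.toContinuousLinearMap (Matrix.toEuclideanLin M) with hT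
  set w := T v with hw
  set xv : ι → ℝ := fun a => w a with hxv
  set yv : κ → ℝ := fun b => v b with hyv
  have hwnn : (0:ℝ) ≤ ‖w‖ := norm_nonneg _
  have hvn : ‖v‖ = Real.sqrt (∑ b, yv b ^ 2) := by
    rw [EuclideanSpace.norm_eq]
    congr 1
    exact Finset.sum_congr rfl fun b _ => by simp [hyv, Real.norm_eq_abs, sq_abs]
  have hwn : ‖w‖ = Real.sqrt (∑ a, xv a ^ 2) := by
    rw [EuclideanSpace.norm_eq]
    congr 1
    exact Finset.sum_congr rfl fun a _ => by simp [hxv, Real.norm_eq_abs, sq_abs]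
  have hco : ∀ a, w a = ∑ b, M a b * yv b := by
    intro a
    simp only [hw, hT, LinearMap.coe_toContinuousLinearMap', Matrix.toEuclideanLin_apply]
    rfl
  have hw2 : ∑ a, ∑ b, xv a * M a b * yv b = ‖w‖ ^ 2 := by
    have h1 : ∑ a, ∑ b, xv a * M a b * yv b = ∑ a, xv a ^ 2 := by
      refine Finset.sum_congr rfl fun a _ => ?_
      calc ∑ b, xv a * M a b * yv b = xv a * ∑ b, M a b * yv b := by
            rw [Finset.mul_sum]; exact Finset.sum_congr rfl fun b _ => by ring
        _ = xv a ^ 2 := by rw [← hco a]; exact (sq (xv a)).symm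
    rw [h1, hwn, Real.sq_sqrt (by positivity)]
  have key : ‖w‖ ^ 2 ≤ c * ‖v‖ * ‖w‖ := by
    rw [← hw2]
    calc ∑ a, ∑ b, xv a * M a b * yv b
        ≤ c * Real.sqrt (∑ a, xv a ^ 2) * Real.sqrt (∑ b, yv b ^ 2) := h xv yv
      _ = c * ‖v‖ * ‖w‖ := by rw [← hwn, ← hvn]; ring
  show ‖w‖ ≤ c * ‖v‖
  rcases (eq_or_lt_of_le hwnn).imp Eq.symm id with h0 | h0
  · rw [h0]; positivity
  · exact le_of_mul_le_mul_right (by nlinarith [key] : ‖w‖ * ‖w‖ ≤ (c * ‖v‖) * ‖w‖) h0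

end aux

lemma hatMatrix_apply_same {m n : ℕ} (A : Matrix (Fin m) (Fin n) ℝ) (a : Fin m ⊕ Fin n) :
    hatMatrix A a a = matSpectralNorm A := by
  rcases a with j | k <;>
    simp [hatMatrix, Matrix.smul_apply, Matrix.one_apply_eq]

lemma hatMatrix_apply_ne {m n : ℕ} (A : Matrix (Fin m) (Fin n) ℝ) {a b : Fin m ⊕ Fin n}
    (h : a.isRight = b.isRight) (hne : a ≠ b) : hatMatrix A a b = 0 := by
  rcases a with j | k <;> rcases b with j' | k' <;> simp_all [hatMatrix, Matrix.smul_apply,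
    Matrix.one_apply, Sum.inl.injEq, Sum.inr.injEq]

lemma hatMatrix_isHermitian {m n : ℕ} (A : Matrix (Fin m) (Fin n) ℝ) :
    (hatMatrix A).IsHermitian := by
  rw [Matrix.IsHermitian]
  ext a b
  rcases a with j | k <;> rcases b with j' | k' <;>
    simp [hatMatrix, Matrix.conjTranspose_apply, Matrix.one_apply, eq_comm]

lemma hatMatrix_posSemidef {m n : ℕ} (A : Matrix (Fin m) (Fin n) ℝ) :
    (hatMatrix A).PosSemidef := by
  refine PosSemidef.of_dotProduct_mulVec_nonneg (hatMatrix_isHermitian A) fun z => ?_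
  set s := matSpectralNorm A with hs
  have hsnn : 0 ≤ s := norm_nonneg _
  have expand : star z ⬝ᵥ hatMatrix A *ᵥ z = ∑ a, ∑ b, z a * hatMatrix A a b * z b := by
    simp only [dotProduct, Matrix.mulVec, star_trivial]
    refine Finset.sum_congr rfl fun a _ => ?_
    rw [Finset.mul_sum]
    exact Finset.sum_congr rfl fun b _ => by ring
  rw [expand]
  rw [Fintype.sum_sum_type]
  have hsplit : ∀ a : Fin m ⊕ Fin n, ∑ b, z a * hatMatrix A a b * z b =
      (∑ j, z a * hatMatrix A a (Sum.inl j) * z (Sum.inl j)) +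
      (∑ k, z a * hatMatrix A a (Sum.inr k) * z (Sum.inr k)) := fun a => Fintype.sum_sum_type _
  simp only [hsplit]
  set P := ∑ j, z (Sum.inl j) ^ 2 with hP
  set Q := ∑ k, z (Sum.inr k) ^ 2 with hQ
  have hPnn : 0 ≤ P := Finset.sum_nonneg fun _ _ => sq_nonneg _
  have hQnn : 0 ≤ Q := Finset.sum_nonneg fun _ _ => sq_nonneg _
  have h11 : ∑ j, ((∑ j', z (Sum.inl j) * hatMatrix A (Sum.inl j) (Sum.inl j') * z (Sum.inl j'))
      + (∑ k, z (Sum.inl j) * hatMatrix A (Sum.inl j) (Sum.inr k) * z (Sum.inr k)))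
      = s * P + ∑ j, ∑ k, z (Sum.inl j) * A j k * z (Sum.inr k) := by
    have hstep : ∀ j, (∑ j', z (Sum.inl j) * hatMatrix A (Sum.inl j) (Sum.inl j') * z (Sum.inl j'))
        + (∑ k, z (Sum.inl j) * hatMatrix A (Sum.inl j) (Sum.inr k) * z (Sum.inr k))
        = s * z (Sum.inl j) ^ 2 + ∑ k, z (Sum.inl j) * A j k * z (Sum.inr k) := by
      intro j
      congr 1
      · have hv : ∀ j', z (Sum.inl j) * hatMatrix A (Sum.inl j) (Sum.inl j') * z (Sum.inl j') =
            if j = j' then s * z (Sum.inl j) ^ 2 else 0 := by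
          intro j'
          by_cases h : j = j'
          · subst h; simp [hatMatrix, Matrix.one_apply_eq]; ring
          · simp [hatMatrix, Matrix.one_apply, h]
        simp only [hv]
        simp
    simp only [hstep]
    rw [Finset.sum_add_distrib, hP, Finset.mul_sum]
  have h22 : ∑ k, ((∑ j, z (Sum.inr k) * hatMatrix A (Sum.inr k) (Sum.inl j) * z (Sum.inl j))
      + (∑ k', z (Sum.inr k) * hatMatrix A (Sum.inr k) (Sum.inr k') * z (Sum.inr k')))
      = (∑ j, ∑ k, z (Sum.inl j) * A j k * z (Sum.inr k)) + s * Q := by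
    have hstep : ∀ k, (∑ j, z (Sum.inr k) * hatMatrix A (Sum.inr k) (Sum.inl j) * z (Sum.inl j))
        + (∑ k', z (Sum.inr k) * hatMatrix A (Sum.inr k) (Sum.inr k') * z (Sum.inr k'))
        = (∑ j, z (Sum.inl j) * A j k * z (Sum.inr k)) + s * z (Sum.inr k) ^ 2 := by
      intro k
      congr 1
      · refine Finset.sum_congr rfl fun j _ => ?_
        simp [hatMatrix, Matrix.transpose_apply]; ring
      · have hv : ∀ k', z (Sum.inr k) * hatMatrix A (Sum.inr k) (Sum.inr k') * z (Sum.inr k') =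
            if k = k' then s * z (Sum.inr k) ^ 2 else 0 := by
          intro k'
          by_cases h : k = k'
          · subst h; simp [hatMatrix, Matrix.one_apply_eq]; ring
          · simp [hatMatrix, Matrix.one_apply, h]
        simp only [hv]
        simp
    simp only [hstep]
    rw [Finset.sum_add_distrib, hQ, Finset.mul_sum, Finset.sum_comm]
  rw [h11, h22]
  set t := ∑ j, ∑ k, z (Sum.inl j) * A j k * z (Sum.inr k) with ht
  have hcross : |t| ≤ s * Real.sqrt P * Real.sqrt Q := quad_abs_le A _ _
  have h1 : -(s * Real.sqrt P * Real.sqrt Q) ≤ t := neg_le_of_abs_le hcross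
  have h2 : Real.sqrt P ^ 2 = P := Real.sq_sqrt hPnn
  have h3 : Real.sqrt Q ^ 2 = Q := Real.sq_sqrt hQnn
  nlinarith [sq_nonneg (Real.sqrt P - Real.sqrt Q), Real.sqrt_nonneg P, Real.sqrt_nonneg Q]

/-- For a symmetric matrix `B` and arbitrary matrices `A_1, …, A_N`, the matrix composition
`C` of `B` with `A_1, …, A_N` satisfies `‖C‖ ≤ ‖B‖ · ∏ i ‖A_i‖`. -/
theorem stmt7 {N : ℕ} {m n : Fin N → ℕ}
    (B : Matrix (Fin N → Bool) (Fin N → Bool) ℝ) (hB : B.IsSymm)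
    (A : ∀ i, Matrix (Fin (m i)) (Fin (n i)) ℝ) :
    matSpectralNorm (matrixComposition B A) ≤ matSpectralNorm B * ∏ i, matSpectralNorm (A i) := by
  classical
  set s : Fin N → ℝ := fun i => matSpectralNorm (A i) with hsdef
  have hsnn : ∀ i, 0 ≤ s i := fun i => norm_nonneg _
  have hprodnn : 0 ≤ ∏ i, s i := Finset.prod_nonneg fun i _ => hsnn i
  have hc : 0 ≤ matSpectralNorm B * ∏ i, s i := mul_nonneg (norm_nonneg _) hprodnn
  refine spectralNorm_le_of _ hc ?_
  intro x y
  -- Gram vectors from the square roots of the PSD matrices `hatMatrix (A i)`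
  have hex : ∀ i, ∃ X : Matrix (Fin (m i) ⊕ Fin (n i)) (Fin (m i) ⊕ Fin (n i)) ℝ,
      hatMatrix (A i) = star X * X := fun i => by
    open scoped MatrixOrder in
    exact CStarAlgebra.nonneg_iff_eq_star_mul_self.mp (hatMatrix_posSemidef (A i)).nonneg
  choose S hS using hex
  have hGram : ∀ i a b, ∑ k, S i k a * S i k b = hatMatrix (A i) a b := by
    intro i a b
    rw [hS i, Matrix.mul_apply]
    rfl
  set u : (∀ i, Fin (m i) ⊕ Fin (n i)) → (∀ i, Fin (m i) ⊕ Fin (n i)) → ℝ :=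
    fun a k => ∏ i, S i (k i) (a i) with hu
  have hP : ∀ a b, ∑ k, u a k * u b k = ∏ i, hatMatrix (A i) (a i) (b i) := by
    intro a b
    calc ∑ k, u a k * u b k = ∑ k : (∀ i, Fin (m i) ⊕ Fin (n i)),
          ∏ i, (S i (k i) (a i) * S i (k i) (b i)) := by
          refine Finset.sum_congr rfl fun k _ => ?_
          rw [hu]
          exact (Finset.prod_mul_distrib).symm
      _ = ∏ i, ∑ c : Fin (m i) ⊕ Fin (n i), S i c (a i) * S i c (b i) := by
          rw [Finset.prod_univ_sum]
          rw [Fintype.piFinset_univ]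
      _ = ∏ i, hatMatrix (A i) (a i) (b i) := Finset.prod_congr rfl fun i _ => hGram i _ _
  set pat : (∀ i, Fin (m i) ⊕ Fin (n i)) → (Fin N → Bool) := fun a i => (a i).isRight with hpat
  have hC : ∀ a b, matrixComposition B A a b =
      B (pat a) (pat b) * ∏ i, hatMatrix (A i) (a i) (b i) := fun a b => rfl
  have hPdiag : ∀ a b, pat a = pat b →
      (∏ i, hatMatrix (A i) (a i) (b i)) = if a = b then ∏ i, s i else 0 := by
    intro a b hpq
    by_cases hab : a = b
    · subst hab
      rw [if_pos rfl]
      exact Finset.prod_congr rfl fun i _ => hatMatrix_apply_same (A i) (a i)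
    · rw [if_neg hab]
      obtain ⟨i, hi⟩ := Function.ne_iff.mp hab
      exact Finset.prod_eq_zero (Finset.mem_univ i) (hatMatrix_apply_ne (A i) (congrFun hpq i) hi)
  set Xv : ((∀ i, Fin (m i) ⊕ Fin (n i)) → ℝ) → (Fin N → Bool) →
      (∀ i, Fin (m i) ⊕ Fin (n i)) → ℝ :=
    fun v c k => ∑ a, (if pat a = c then v a else 0) * u a k with hXv
  -- Step 2: row sums of squares
  have step2 : ∀ v : (∀ i, Fin (m i) ⊕ Fin (n i)) → ℝ,
      ∑ k, ∑ c, (Xv v c k) ^ 2 = (∏ i, s i) * ∑ a, v a ^ 2 := by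
    intro v
    have hpt : ∀ a b, (if pat b = pat a then v a * v b * ∏ i, hatMatrix (A i) (a i) (b i) else 0)
        = (if b = a then v a ^ 2 * ∏ i, s i else 0) := by
      intro a b
      by_cases hab : b = a
      · subst hab
        rw [if_pos rfl, if_pos rfl, hPdiag b b rfl, if_pos rfl]
        ring
      · by_cases hpq : pat b = pat a
        · rw [if_pos hpq, if_neg hab, hPdiag a b hpq.symm,
            if_neg (fun h => hab h.symm), mul_zero]
        · rw [if_neg hpq, if_neg hab]
    calc ∑ k, ∑ c, (Xv v c k) ^ 2 = ∑ c, ∑ k, (Xv v c k) ^ 2 := Finset.sum_comm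
      _ = ∑ c, ∑ k, ∑ a, ∑ b, ((if pat a = c then v a else 0) * u a k) *
            ((if pat b = c then v b else 0) * u b k) := by
          refine Finset.sum_congr rfl fun c _ => Finset.sum_congr rfl fun k _ => ?_
          rw [sq, hXv]
          exact Finset.sum_mul_sum _ _ _ _
      _ = ∑ c, ∑ a, ∑ b, ∑ k, ((if pat a = c then v a else 0) * u a k) *
            ((if pat b = c then v b else 0) * u b k) := by
          refine Finset.sum_congr rfl fun c _ => ?_
          rw [Finset.sum_comm]
          exact Finset.sum_congr rfl fun a _ => Finset.sum_comm
      _ = ∑ c, ∑ a, ∑ b, (if pat a = c then (if pat b = c then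
            v a * v b * ∏ i, hatMatrix (A i) (a i) (b i) else 0) else 0) := by
          refine Finset.sum_congr rfl fun c _ => Finset.sum_congr rfl fun a _ =>
            Finset.sum_congr rfl fun b _ => ?_
          by_cases h1 : pat a = c
          · by_cases h2 : pat b = c
            · rw [if_pos h1, if_pos h2, if_pos h1, if_pos h2, ← hP a b, Finset.mul_sum]
              exact Finset.sum_congr rfl fun k _ => by ring
            · simp [h1, h2]
          · simp [h1]
      _ = ∑ a, ∑ b, ∑ c, (if pat a = c then (if pat b = c then
            v a * v b * ∏ i, hatMatrix (A i) (a i) (b i) else 0) else 0) := by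
          rw [Finset.sum_comm]
          exact Finset.sum_congr rfl fun a _ => Finset.sum_comm
      _ = ∑ a, ∑ b, (if pat b = pat a then
            v a * v b * ∏ i, hatMatrix (A i) (a i) (b i) else 0) := by
          refine Finset.sum_congr rfl fun a _ => Finset.sum_congr rfl fun b _ => ?_
          rw [Finset.sum_ite_eq]
          simp
      _ = ∑ a, ∑ b, (if b = a then v a ^ 2 * ∏ i, s i else 0) := by
          refine Finset.sum_congr rfl fun a _ => Finset.sum_congr rfl fun b _ => hpt a b
      _ = ∑ a, v a ^ 2 * ∏ i, s i := by
          refine Finset.sum_congr rfl fun a _ => ?_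
          have : ∀ b, (if b = a then v a ^ 2 * ∏ i, s i else 0)
              = (if a = b then v a ^ 2 * ∏ i, s i else 0) := by
            intro b; simp [eq_comm]
          simp only [this]
          rw [Finset.sum_ite_eq]
          simp
      _ = (∏ i, s i) * ∑ a, v a ^ 2 := by
          rw [Finset.mul_sum]
          exact Finset.sum_congr rfl fun a _ => by ring
  -- Step 1: rewriting the bilinear form
  have step1 : ∑ a, ∑ b, x a * matrixComposition B A a b * y b
      = ∑ k, ∑ c, ∑ d, Xv x c k * B c d * Xv y d k := by
    have hper : ∀ k, ∑ c, ∑ d, Xv x c k * B c d * Xv y d k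
        = ∑ a, ∑ b, (x a * u a k) * B (pat a) (pat b) * (y b * u b k) := by
      intro k
      have hYW : ∀ c : Fin N → Bool, ∑ d, B c d * Xv y d k
          = ∑ b, B c (pat b) * (y b * u b k) := by
        intro c
        calc ∑ d, B c d * Xv y d k
            = ∑ d, ∑ b, (if pat b = d then B c d * (y b * u b k) else 0) := by
              refine Finset.sum_congr rfl fun d _ => ?_
              rw [hXv, Finset.mul_sum]
              refine Finset.sum_congr rfl fun b _ => ?_
              by_cases h : pat b = d
              · rw [if_pos h, if_pos h]
              · rw [if_neg h, if_neg h, zero_mul, mul_zero]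
          _ = ∑ b, ∑ d, (if pat b = d then B c d * (y b * u b k) else 0) := Finset.sum_comm
          _ = ∑ b, B c (pat b) * (y b * u b k) := by
              refine Finset.sum_congr rfl fun b _ => ?_
              rw [Finset.sum_ite_eq]
              simp
      calc ∑ c, ∑ d, Xv x c k * B c d * Xv y d k
          = ∑ c, Xv x c k * ∑ d, B c d * Xv y d k := by
            refine Finset.sum_congr rfl fun c _ => ?_
            rw [Finset.mul_sum]
            exact Finset.sum_congr rfl fun d _ => by ring
        _ = ∑ c, ∑ a, (if pat a = c then (x a * u a k) * ∑ d, B c d * Xv y d k else 0) := by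
            refine Finset.sum_congr rfl fun c _ => ?_
            rw [hXv, Finset.sum_mul]
            refine Finset.sum_congr rfl fun a _ => ?_
            by_cases h : pat a = c
            · rw [if_pos h, if_pos h]
            · rw [if_neg h, if_neg h, zero_mul, zero_mul]
        _ = ∑ a, ∑ c, (if pat a = c then (x a * u a k) * ∑ d, B c d * Xv y d k else 0) :=
            Finset.sum_comm
        _ = ∑ a, (x a * u a k) * ∑ d, B (pat a) d * Xv y d k := by
            refine Finset.sum_congr rfl fun a _ => ?_
            rw [Finset.sum_ite_eq]
            simp
        _ = ∑ a, ∑ b, (x a * u a k) * B (pat a) (pat b) * (y b * u b k) := by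
            refine Finset.sum_congr rfl fun a _ => ?_
            rw [hYW (pat a), Finset.mul_sum]
            exact Finset.sum_congr rfl fun b _ => by ring
    calc ∑ a, ∑ b, x a * matrixComposition B A a b * y b
        = ∑ a, ∑ b, ∑ k, (x a * u a k) * B (pat a) (pat b) * (y b * u b k) := by
          refine Finset.sum_congr rfl fun a _ => Finset.sum_congr rfl fun b _ => ?_
          rw [hC a b, ← hP a b, Finset.mul_sum, Finset.mul_sum, Finset.sum_mul]
          exact Finset.sum_congr rfl fun k _ => by ring
      _ = ∑ a, ∑ k, ∑ b, (x a * u a k) * B (pat a) (pat b) * (y b * u b k) :=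
          Finset.sum_congr rfl fun a _ => Finset.sum_comm
      _ = ∑ k, ∑ a, ∑ b, (x a * u a k) * B (pat a) (pat b) * (y b * u b k) :=
          Finset.sum_comm
      _ = ∑ k, ∑ c, ∑ d, Xv x c k * B c d * Xv y d k :=
          Finset.sum_congr rfl fun k _ => (hper k).symm
  -- conclusion
  have hXsqnn : ∀ (v : (∀ i, Fin (m i) ⊕ Fin (n i)) → ℝ) k, 0 ≤ ∑ c, (Xv v c k) ^ 2 :=
    fun v k => Finset.sum_nonneg fun c _ => sq_nonneg _
  have hss : Real.sqrt (∏ i, s i) * Real.sqrt (∏ i, s i) = ∏ i, s i :=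
    Real.mul_self_sqrt hprodnn
  calc ∑ a, ∑ b, x a * matrixComposition B A a b * y b
      ≤ |∑ a, ∑ b, x a * matrixComposition B A a b * y b| := le_abs_self _
    _ = |∑ k, ∑ c, ∑ d, Xv x c k * B c d * Xv y d k| := by rw [step1]
    _ ≤ ∑ k, |∑ c, ∑ d, Xv x c k * B c d * Xv y d k| := Finset.abs_sum_le_sum_abs _ _
    _ ≤ ∑ k, matSpectralNorm B * Real.sqrt (∑ c, (Xv x c k) ^ 2) *
          Real.sqrt (∑ d, (Xv y d k) ^ 2) :=
        Finset.sum_le_sum fun k _ => quad_abs_le B (fun c => Xv x c k) (fun d => Xv y d k)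
    _ = matSpectralNorm B * ∑ k, Real.sqrt (∑ c, (Xv x c k) ^ 2) *
          Real.sqrt (∑ d, (Xv y d k) ^ 2) := by
        rw [Finset.mul_sum]
        exact Finset.sum_congr rfl fun k _ => by ring
    _ ≤ matSpectralNorm B * (Real.sqrt (∑ k, ∑ c, (Xv x c k) ^ 2) *
          Real.sqrt (∑ k, ∑ d, (Xv y d k) ^ 2)) := by
        refine mul_le_mul_of_nonneg_left ?_ (norm_nonneg _)
        exact Real.sum_sqrt_mul_sqrt_le Finset.univ (fun k => hXsqnn x k) (fun k => hXsqnn y k)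
    _ = matSpectralNorm B * (Real.sqrt ((∏ i, s i) * ∑ a, x a ^ 2) *
          Real.sqrt ((∏ i, s i) * ∑ b, y b ^ 2)) := by rw [step2 x, step2 y]
    _ = matSpectralNorm B * ((Real.sqrt (∏ i, s i) * Real.sqrt (∑ a, x a ^ 2)) *
          (Real.sqrt (∏ i, s i) * Real.sqrt (∑ b, y b ^ 2))) := by
        rw [Real.sqrt_mul hprodnn, Real.sqrt_mul hprodnn]
    _ = matSpectralNorm B * (Real.sqrt (∏ i, s i) * Real.sqrt (∏ i, s i)) *
          Real.sqrt (∑ a, x a ^ 2) * Real.sqrt (∑ b, y b ^ 2) := by ring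
    _ = matSpectralNorm B * (∏ i, s i) * Real.sqrt (∑ a, x a ^ 2) *
          Real.sqrt (∑ b, y b ^ 2) := by rw [hss]
end

section
/- Let f ⊆ {0,1}^N × [K] be a relation and g : {0,1}^m → {0,1} a Boolean function. Then ADV±_rel(f ∘ g^N) ≤ ADV±_rel(f) · ADV±(g), where the composed relation h = f ∘ g^N ⊆ {0,1}^{Nm} × [K] is defined by ((x_1,…,x_N), a) ∈ h iff ((g(x_1),…,g(x_N)), a) ∈ f. -/
open Matrix

/-- The (dual formulation of the) negative weight adversary bound `ADV±(g)` of a Boolean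
function `g`: the infimum over all families of finite-dimensional vectors
`{u_{y,i}}, {v_{y,i}}` satisfying the dual adversary constraints of the larger of the two
maximal squared norms. -/
noncomputable def adv {ι : Type} [Fintype ι] [DecidableEq ι]
    (g : (ι → Bool) → Bool) : ℝ :=
  sInf {c : ℝ | ∃ d : ℕ, ∃ u v : (ι → Bool) → ι → (Fin d → ℝ),
    (∀ y, ∑ i, ∑ t, u y i t ^ 2 ≤ c) ∧
    (∀ y, ∑ i, ∑ t, v y i t ^ 2 ≤ c) ∧
    (∀ y y' : ι → Bool,
      (∑ i ∈ Finset.univ.filter fun i => y i ≠ y' i, u y i ⬝ᵥ v y' i)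
        = if g y = g y' then 0 else 1)}

/-- The relational adversary bound `ADV±_rel(f)` of a relation
`f ⊆ {0,1}^ι × [K]`: the infimum over all families `{ψ_{z,p}}, {φ_{z,p}}, {σ_{z,a}}` of
finite-dimensional vectors satisfying the relational dual adversary constraints of the larger
of the two maximal squared norms. -/
noncomputable def advRel {ι : Type} [Fintype ι] [DecidableEq ι] {K : ℕ}
    (f : (ι → Bool) → Fin K → Prop) : ℝ :=
  sInf {c : ℝ | ∃ d : ℕ, ∃ ψ φ : (ι → Bool) → ι → (Fin d → ℝ),
    ∃ σ : (ι → Bool) → Fin K → (Fin d → ℝ),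
    (∀ z, ∑ p, ∑ t, ψ z p t ^ 2 ≤ c) ∧
    (∀ z, ∑ p, ∑ t, φ z p t ^ 2 ≤ c) ∧
    (∀ z z' : ι → Bool,
      (∑ p ∈ Finset.univ.filter fun p => z p ≠ z' p, ψ z p ⬝ᵥ φ z' p)
        = 1 - ∑ a, σ z a ⬝ᵥ σ z' a) ∧
    (∀ z a, ¬ f z a → σ z a = 0)}


-- ===== auxiliary machinery =====
open Finset

section pairhelpers
variable {ι : Type} [Fintype ι] [DecidableEq ι]

/-- number of differing coordinates -/
noncomputable def dst (z z' : ι → Bool) : ℕ :=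
  (Finset.univ.filter fun i => z i ≠ z' i).card

lemma dst_pos {z z' : ι → Bool} (h : z ≠ z') : 0 < dst z z' := by
  obtain ⟨i, hi⟩ := Function.ne_iff.mp h
  exact Finset.card_pos.mpr ⟨i, by simp [dst, hi]⟩

lemma pairConstruct (D : (ι → Bool) → (ι → Bool) → ℝ) :
    ∃ (d : ℕ) (u v : (ι → Bool) → ι → (Fin d → ℝ)) (c : ℝ),
      (∀ z, ∑ i, ∑ t, u z i t ^ 2 ≤ c) ∧
      (∀ z, ∑ i, ∑ t, v z i t ^ 2 ≤ c) ∧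
      (∀ z z', (∑ i ∈ Finset.univ.filter fun i => z i ≠ z' i, u z i ⬝ᵥ v z' i)
        = if z = z' then 0 else D z z') := by
  classical
  set e : ((ι → Bool) × (ι → Bool)) ≃ Fin (Fintype.card ((ι → Bool) × (ι → Bool))) :=
    Fintype.equivFin _ with he
  refine ⟨Fintype.card ((ι → Bool) × (ι → Bool)),
    (fun z i t => if z = (e.symm t).1 ∧ (e.symm t).1 i ≠ (e.symm t).2 i
        then D (e.symm t).1 (e.symm t).2 / dst (e.symm t).1 (e.symm t).2 else 0),
    (fun z i t => if z = (e.symm t).2 ∧ (e.symm t).1 i ≠ (e.symm t).2 i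
        then 1 else 0),
    ∑ p : (ι → Bool) × (ι → Bool), ((dst p.1 p.2 : ℝ) * (D p.1 p.2 / dst p.1 p.2) ^ 2 + dst p.1 p.2),
    ?_, ?_, ?_⟩
  · intro z
    have : ∀ i : ι, ∑ t, (if z = (e.symm t).1 ∧ (e.symm t).1 i ≠ (e.symm t).2 i
        then D (e.symm t).1 (e.symm t).2 / dst (e.symm t).1 (e.symm t).2 else 0) ^ 2
        = ∑ p : (ι → Bool) × (ι → Bool), (if z = p.1 ∧ p.1 i ≠ p.2 i
        then D p.1 p.2 / dst p.1 p.2 else 0) ^ 2 := by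
      intro i
      exact Equiv.sum_comp e.symm fun p => (if z = p.1 ∧ p.1 i ≠ p.2 i
        then D p.1 p.2 / dst p.1 p.2 else 0) ^ 2
    rw [Finset.sum_congr rfl fun i _ => this i, Finset.sum_comm]
    refine Finset.sum_le_sum fun p _ => ?_
    have h1 : ∑ i : ι, (if z = p.1 ∧ p.1 i ≠ p.2 i then D p.1 p.2 / dst p.1 p.2 else 0) ^ 2
        ≤ (dst p.1 p.2 : ℝ) * (D p.1 p.2 / dst p.1 p.2) ^ 2 := by
      calc ∑ i : ι, (if z = p.1 ∧ p.1 i ≠ p.2 i then D p.1 p.2 / dst p.1 p.2 else 0) ^ 2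
          ≤ ∑ i ∈ Finset.univ.filter (fun i => p.1 i ≠ p.2 i),
              (D p.1 p.2 / dst p.1 p.2) ^ 2 := by
            rw [Finset.sum_filter]
            refine Finset.sum_le_sum fun i _ => ?_
            by_cases h : z = p.1 ∧ p.1 i ≠ p.2 i
            · simp [h, h.2]
            · simp only [if_neg h]
              by_cases h2 : p.1 i ≠ p.2 i <;> simp [h2, sq_nonneg]
          _ = (dst p.1 p.2 : ℝ) * (D p.1 p.2 / dst p.1 p.2) ^ 2 := by
            rw [Finset.sum_const, dst, nsmul_eq_mul]
    have h2 : (0:ℝ) ≤ dst p.1 p.2 := Nat.cast_nonneg _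
    linarith
  · intro z
    have : ∀ i : ι, ∑ t, (if z = (e.symm t).2 ∧ (e.symm t).1 i ≠ (e.symm t).2 i
        then (1:ℝ) else 0) ^ 2
        = ∑ p : (ι → Bool) × (ι → Bool), (if z = p.2 ∧ p.1 i ≠ p.2 i then (1:ℝ) else 0) ^ 2 := by
      intro i
      exact Equiv.sum_comp e.symm fun p => (if z = p.2 ∧ p.1 i ≠ p.2 i then (1:ℝ) else 0) ^ 2
    rw [Finset.sum_congr rfl fun i _ => this i, Finset.sum_comm]
    refine Finset.sum_le_sum fun p _ => ?_
    have h1 : ∑ i : ι, (if z = p.2 ∧ p.1 i ≠ p.2 i then (1:ℝ) else 0) ^ 2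
        ≤ (dst p.1 p.2 : ℝ) := by
      calc ∑ i : ι, (if z = p.2 ∧ p.1 i ≠ p.2 i then (1:ℝ) else 0) ^ 2
          ≤ ∑ i ∈ Finset.univ.filter (fun i => p.1 i ≠ p.2 i), (1:ℝ) := by
            rw [Finset.sum_filter]
            refine Finset.sum_le_sum fun i _ => ?_
            by_cases h : z = p.2 ∧ p.1 i ≠ p.2 i
            · simp [h, h.2]
            · simp only [if_neg h]
              by_cases h2 : p.1 i ≠ p.2 i <;> simp [h2]
          _ = (dst p.1 p.2 : ℝ) := by rw [Finset.sum_const, dst, nsmul_eq_mul, mul_one]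
    have h2 : (0:ℝ) ≤ (dst p.1 p.2 : ℝ) * (D p.1 p.2 / dst p.1 p.2) ^ 2 :=
      mul_nonneg (Nat.cast_nonneg _) (sq_nonneg _)
    linarith
  · intro z z'
    have hdot : ∀ i : ι,
        (fun t => if z = (e.symm t).1 ∧ (e.symm t).1 i ≠ (e.symm t).2 i
          then D (e.symm t).1 (e.symm t).2 / dst (e.symm t).1 (e.symm t).2 else 0) ⬝ᵥ
        (fun t => if z' = (e.symm t).2 ∧ (e.symm t).1 i ≠ (e.symm t).2 i then 1 else 0)
        = if z i ≠ z' i then D z z' / dst z z' else 0 := by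
      intro i
      unfold dotProduct
      have := Equiv.sum_comp e.symm fun p : (ι → Bool) × (ι → Bool) =>
        (if z = p.1 ∧ p.1 i ≠ p.2 i then D p.1 p.2 / dst p.1 p.2 else 0) *
        (if z' = p.2 ∧ p.1 i ≠ p.2 i then (1:ℝ) else 0)
      rw [this]
      rw [Finset.sum_eq_single (z, z')]
      · by_cases h : z i ≠ z' i <;> simp [h]
      · intro p _ hp
        by_cases h1 : z = p.1 ∧ p.1 i ≠ p.2 i
        · by_cases h2 : z' = p.2 ∧ p.1 i ≠ p.2 i
          · exfalso; apply hp; rw [Prod.ext_iff]; exact ⟨h1.1.symm, h2.1.symm⟩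
          · simp [h2]
        · simp [h1]
      · simp
    rw [Finset.sum_congr rfl fun i _ => hdot i]
    by_cases h : z = z'
    · simp [h]
    · rw [if_neg h]
      have : ∀ i ∈ Finset.univ.filter (fun i => z i ≠ z' i),
          (if z i ≠ z' i then D z z' / dst z z' else 0) = D z z' / dst z z' := by
        intro i hi
        simp only [Finset.mem_filter] at hi
        rw [if_pos hi.2]
      rw [Finset.sum_congr rfl this, Finset.sum_const]
      have hd : (0:ℕ) < dst z z' := dst_pos h
      rw [nsmul_eq_mul]
      have hcard : (Finset.univ.filter fun i => z i ≠ z' i).card = dst z z' := rfl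
      rw [hcard]
      have hd' : (dst z z' : ℝ) ≠ 0 := Nat.cast_ne_zero.mpr hd.ne'
      field_simp

end pairhelpers


def mkVec {df dg : ℕ} (A : Fin df × Fin dg → ℝ) (B : Fin df → ℝ) :
    Fin (df * dg + df) → ℝ :=
  fun r => Sum.elim (fun s => A (finProdFinEquiv.symm s)) B (finSumFinEquiv.symm r)

lemma mkVec_dot {df dg : ℕ} (A A' : Fin df × Fin dg → ℝ) (B B' : Fin df → ℝ) :
    mkVec A B ⬝ᵥ mkVec A' B' = (∑ p : Fin df × Fin dg, A p * A' p) + B ⬝ᵥ B' := by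
  unfold dotProduct
  rw [← Equiv.sum_comp finSumFinEquiv (fun r => mkVec A B r * mkVec A' B' r)]
  unfold mkVec
  simp only [Equiv.symm_apply_apply]
  rw [Fintype.sum_sum_type]
  simp only [Sum.elim_inl, Sum.elim_inr]
  congr 1
  exact Equiv.sum_comp finProdFinEquiv.symm fun p => A p * A' p

lemma mkVec_sq {df dg : ℕ} (A : Fin df × Fin dg → ℝ) (B : Fin df → ℝ) :
    ∑ t, mkVec A B t ^ 2 = (∑ p : Fin df × Fin dg, A p ^ 2) + ∑ s, B s ^ 2 := by
  have := mkVec_dot A A B B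
  simp only [dotProduct] at this
  simpa [pow_two] using this

lemma mkVec_zero {df dg : ℕ} : mkVec (fun _ : Fin df × Fin dg => (0:ℝ)) (fun _ : Fin df => (0:ℝ)) = 0 := by
  funext r
  unfold mkVec
  rcases finSumFinEquiv.symm r with s | s <;> simp

lemma tensor_sum {df dg : ℕ} (a a' : Fin df → ℝ) (b b' : Fin dg → ℝ) :
    ∑ p : Fin df × Fin dg, (a p.1 * b p.2) * (a' p.1 * b' p.2)
      = (a ⬝ᵥ a') * (b ⬝ᵥ b') := by
  rw [Fintype.sum_prod_type]
  unfold dotProduct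
  rw [Finset.sum_mul_sum]
  exact Finset.sum_congr rfl fun i _ => Finset.sum_congr rfl fun j _ => by ring

lemma tensor_sq {df dg : ℕ} (a : Fin df → ℝ) (b : Fin dg → ℝ) :
    ∑ p : Fin df × Fin dg, (a p.1 * b p.2) ^ 2
      = (∑ s, a s ^ 2) * (∑ s, b s ^ 2) := by
  have := tensor_sum a a b b
  simp only [dotProduct] at this
  calc ∑ p : Fin df × Fin dg, (a p.1 * b p.2) ^ 2
      = ∑ p : Fin df × Fin dg, (a p.1 * b p.2) * (a p.1 * b p.2) :=
        Finset.sum_congr rfl fun p _ => by ring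
    _ = (∑ s, a s * a s) * (∑ s, b s * b s) := this
    _ = (∑ s, a s ^ 2) * (∑ s, b s ^ 2) := by
        congr 1 <;> exact Finset.sum_congr rfl fun s _ => (pow_two _).symm

lemma combineMem {N m K : ℕ} (f : (Fin N → Bool) → Fin K → Prop)
    (g : (Fin m → Bool) → Bool) {cf cg : ℝ}
    (hf : ∃ df : ℕ, ∃ ψ φ : (Fin N → Bool) → Fin N → (Fin df → ℝ),
      ∃ σ : (Fin N → Bool) → Fin K → (Fin df → ℝ),
      (∀ z, ∑ p, ∑ t, ψ z p t ^ 2 ≤ cf) ∧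
      (∀ z, ∑ p, ∑ t, φ z p t ^ 2 ≤ cf) ∧
      (∀ z z' : Fin N → Bool,
        (∑ p ∈ Finset.univ.filter fun p => z p ≠ z' p, ψ z p ⬝ᵥ φ z' p)
          = 1 - ∑ a, σ z a ⬝ᵥ σ z' a) ∧
      (∀ z a, ¬ f z a → σ z a = 0))
    (hg : ∃ dg : ℕ, ∃ u v : (Fin m → Bool) → Fin m → (Fin dg → ℝ),
      (∀ y, ∑ i, ∑ t, u y i t ^ 2 ≤ cg) ∧
      (∀ y, ∑ i, ∑ t, v y i t ^ 2 ≤ cg) ∧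
      (∀ y y' : Fin m → Bool,
        (∑ i ∈ Finset.univ.filter fun i => y i ≠ y' i, u y i ⬝ᵥ v y' i)
          = if g y = g y' then 0 else 1)) :
    ∃ d : ℕ, ∃ α β : (Fin N × Fin m → Bool) → Fin N × Fin m → (Fin d → ℝ),
      ∃ ρ : (Fin N × Fin m → Bool) → Fin K → (Fin d → ℝ),
      (∀ x, ∑ p, ∑ t, α x p t ^ 2 ≤ cf * cg) ∧
      (∀ x, ∑ p, ∑ t, β x p t ^ 2 ≤ cf * cg) ∧
      (∀ x x' : Fin N × Fin m → Bool,
        (∑ p ∈ Finset.univ.filter fun p => x p ≠ x' p, α x p ⬝ᵥ β x' p)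
          = 1 - ∑ a, ρ x a ⬝ᵥ ρ x' a) ∧
      (∀ x a, ¬ (f (fun p => g fun q => x (p, q)) a) → ρ x a = 0) := by
  classical
  obtain ⟨df, ψ, φ, σ, hψ, hφ, hconf, hσ0⟩ := hf
  obtain ⟨dg, u, v, hu, hv, hcong⟩ := hg
  -- nonnegativity of the bounds
  have sq_sum_nonneg : ∀ {n k : ℕ} (w : Fin n → Fin k → ℝ),
      (0:ℝ) ≤ ∑ i, ∑ t, w i t ^ 2 := fun w =>
    Finset.sum_nonneg fun i _ => Finset.sum_nonneg fun t _ => sq_nonneg _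
  have hcg0 : (0:ℝ) ≤ cg := le_trans (sq_sum_nonneg (u fun _ => false)) (hu _)
  set xt : (Fin N × Fin m → Bool) → Fin N → Bool :=
    fun x p => g (fun q => x (p, q)) with hxt
  refine ⟨df * dg + df,
    (fun x ℓ => mkVec (fun s => ψ (xt x) ℓ.1 s.1 * u (fun q => x (ℓ.1, q)) ℓ.2 s.2)
      (fun _ => 0)),
    (fun x ℓ => mkVec (fun s => φ (xt x) ℓ.1 s.1 * v (fun q => x (ℓ.1, q)) ℓ.2 s.2)
      (fun _ => 0)),
    (fun x a => mkVec (fun _ => 0) (σ (xt x) a)), ?_, ?_, ?_, ?_⟩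
  · intro x
    have h1 : ∀ ℓ : Fin N × Fin m,
        ∑ t, (mkVec (fun s => ψ (xt x) ℓ.1 s.1 * u (fun q => x (ℓ.1, q)) ℓ.2 s.2)
          (fun _ => (0:ℝ))) t ^ 2
        = (∑ s1, ψ (xt x) ℓ.1 s1 ^ 2) * (∑ s2, u (fun q => x (ℓ.1, q)) ℓ.2 s2 ^ 2) := by
      intro ℓ
      rw [mkVec_sq, tensor_sq]
      simp
    rw [Finset.sum_congr rfl fun ℓ _ => h1 ℓ, Fintype.sum_prod_type]
    calc ∑ p : Fin N, ∑ q : Fin m,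
          (∑ s1, ψ (xt x) p s1 ^ 2) * (∑ s2, u (fun q' => x (p, q')) q s2 ^ 2)
        = ∑ p : Fin N, (∑ s1, ψ (xt x) p s1 ^ 2) *
            (∑ q : Fin m, ∑ s2, u (fun q' => x (p, q')) q s2 ^ 2) := by
          exact Finset.sum_congr rfl fun p _ => (Finset.mul_sum _ _ _).symm
      _ ≤ ∑ p : Fin N, (∑ s1, ψ (xt x) p s1 ^ 2) * cg := by
          refine Finset.sum_le_sum fun p _ => ?_
          exact mul_le_mul_of_nonneg_left (hu _)
            (Finset.sum_nonneg fun s _ => sq_nonneg _)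
      _ = (∑ p : Fin N, ∑ s1, ψ (xt x) p s1 ^ 2) * cg := (Finset.sum_mul _ _ _).symm
      _ ≤ cf * cg := mul_le_mul_of_nonneg_right (hψ _) hcg0
  · intro x
    have h1 : ∀ ℓ : Fin N × Fin m,
        ∑ t, (mkVec (fun s => φ (xt x) ℓ.1 s.1 * v (fun q => x (ℓ.1, q)) ℓ.2 s.2)
          (fun _ => (0:ℝ))) t ^ 2
        = (∑ s1, φ (xt x) ℓ.1 s1 ^ 2) * (∑ s2, v (fun q => x (ℓ.1, q)) ℓ.2 s2 ^ 2) := by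
      intro ℓ
      rw [mkVec_sq, tensor_sq]
      simp
    rw [Finset.sum_congr rfl fun ℓ _ => h1 ℓ, Fintype.sum_prod_type]
    calc ∑ p : Fin N, ∑ q : Fin m,
          (∑ s1, φ (xt x) p s1 ^ 2) * (∑ s2, v (fun q' => x (p, q')) q s2 ^ 2)
        = ∑ p : Fin N, (∑ s1, φ (xt x) p s1 ^ 2) *
            (∑ q : Fin m, ∑ s2, v (fun q' => x (p, q')) q s2 ^ 2) := by
          exact Finset.sum_congr rfl fun p _ => (Finset.mul_sum _ _ _).symm
      _ ≤ ∑ p : Fin N, (∑ s1, φ (xt x) p s1 ^ 2) * cg := by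
          refine Finset.sum_le_sum fun p _ => ?_
          exact mul_le_mul_of_nonneg_left (hv _)
            (Finset.sum_nonneg fun s _ => sq_nonneg _)
      _ = (∑ p : Fin N, ∑ s1, φ (xt x) p s1 ^ 2) * cg := (Finset.sum_mul _ _ _).symm
      _ ≤ cf * cg := mul_le_mul_of_nonneg_right (hφ _) hcg0
  · intro x x'
    have hαβ : ∀ ℓ : Fin N × Fin m,
        (mkVec (fun s => ψ (xt x) ℓ.1 s.1 * u (fun q => x (ℓ.1, q)) ℓ.2 s.2)
          (fun _ => (0:ℝ))) ⬝ᵥ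
        (mkVec (fun s => φ (xt x') ℓ.1 s.1 * v (fun q => x' (ℓ.1, q)) ℓ.2 s.2)
          (fun _ => (0:ℝ)))
        = (ψ (xt x) ℓ.1 ⬝ᵥ φ (xt x') ℓ.1) *
          (u (fun q => x (ℓ.1, q)) ℓ.2 ⬝ᵥ v (fun q => x' (ℓ.1, q)) ℓ.2) := by
      intro ℓ
      rw [mkVec_dot, tensor_sum]
      simp [dotProduct]
    have hρρ : ∀ a, (mkVec (fun _ : Fin df × Fin dg => (0:ℝ)) (σ (xt x) a)) ⬝ᵥ
        (mkVec (fun _ : Fin df × Fin dg => (0:ℝ)) (σ (xt x') a))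
        = σ (xt x) a ⬝ᵥ σ (xt x') a := by
      intro a
      rw [mkVec_dot]
      simp
    rw [Finset.sum_filter]
    simp only [hαβ, hρρ]
    rw [Fintype.sum_prod_type]
    have hinner : ∀ p : Fin N, (∑ q : Fin m,
        if x (p, q) ≠ x' (p, q) then
          (ψ (xt x) p ⬝ᵥ φ (xt x') p) *
            (u (fun q' => x (p, q')) q ⬝ᵥ v (fun q' => x' (p, q')) q)
        else 0)
        = (ψ (xt x) p ⬝ᵥ φ (xt x') p) *
            (if g (fun q' => x (p, q')) = g (fun q' => x' (p, q')) then 0 else 1) := by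
      intro p
      rw [← hcong (fun q' => x (p, q')) (fun q' => x' (p, q')), Finset.sum_filter,
        Finset.mul_sum]
      refine Finset.sum_congr rfl fun q _ => ?_
      by_cases hq : x (p, q) ≠ x' (p, q)
      · simp only [if_pos hq]
      · simp only [if_neg hq, mul_zero]
    rw [Finset.sum_congr rfl fun p _ => hinner p]
    have hmain : ∀ p : Fin N,
        (ψ (xt x) p ⬝ᵥ φ (xt x') p) *
            (if g (fun q' => x (p, q')) = g (fun q' => x' (p, q')) then 0 else 1)
        = if xt x p ≠ xt x' p then ψ (xt x) p ⬝ᵥ φ (xt x') p else 0 := by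
      intro p
      by_cases hp : xt x p = xt x' p
      · have hgp : g (fun q' => x (p, q')) = g (fun q' => x' (p, q')) := hp
        simp [hgp, hp]
      · have hgp : ¬ g (fun q' => x (p, q')) = g (fun q' => x' (p, q')) := hp
        simp [hgp, hp]
    rw [Finset.sum_congr rfl fun p _ => hmain p, ← Finset.sum_filter,
      hconf (xt x) (xt x')]
  · intro x a ha
    have h0 : σ (xt x) a = 0 := hσ0 _ _ ha
    show mkVec (fun _ => (0:ℝ)) (σ (xt x) a) = 0
    rw [h0]
    exact mkVec_zero


def advSet {ι : Type} [Fintype ι] [DecidableEq ι] (g : (ι → Bool) → Bool) : Set ℝ :=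
  {c : ℝ | ∃ d : ℕ, ∃ u v : (ι → Bool) → ι → (Fin d → ℝ),
    (∀ y, ∑ i, ∑ t, u y i t ^ 2 ≤ c) ∧
    (∀ y, ∑ i, ∑ t, v y i t ^ 2 ≤ c) ∧
    (∀ y y' : ι → Bool,
      (∑ i ∈ Finset.univ.filter fun i => y i ≠ y' i, u y i ⬝ᵥ v y' i)
        = if g y = g y' then 0 else 1)}

def advRelSet {ι : Type} [Fintype ι] [DecidableEq ι] {K : ℕ}
    (f : (ι → Bool) → Fin K → Prop) : Set ℝ :=
  {c : ℝ | ∃ d : ℕ, ∃ ψ φ : (ι → Bool) → ι → (Fin d → ℝ),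
    ∃ σ : (ι → Bool) → Fin K → (Fin d → ℝ),
    (∀ z, ∑ p, ∑ t, ψ z p t ^ 2 ≤ c) ∧
    (∀ z, ∑ p, ∑ t, φ z p t ^ 2 ≤ c) ∧
    (∀ z z' : ι → Bool,
      (∑ p ∈ Finset.univ.filter fun p => z p ≠ z' p, ψ z p ⬝ᵥ φ z' p)
        = 1 - ∑ a, σ z a ⬝ᵥ σ z' a) ∧
    (∀ z a, ¬ f z a → σ z a = 0)}

section cat
def catVec {d1 d2 : ℕ} (A : Fin d1 → ℝ) (B : Fin d2 → ℝ) : Fin (d1 + d2) → ℝ :=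
  fun r => Sum.elim A B (finSumFinEquiv.symm r)

lemma catVec_dot {d1 d2 : ℕ} (A A' : Fin d1 → ℝ) (B B' : Fin d2 → ℝ) :
    catVec A B ⬝ᵥ catVec A' B' = A ⬝ᵥ A' + B ⬝ᵥ B' := by
  unfold dotProduct
  rw [← Equiv.sum_comp finSumFinEquiv (fun r => catVec A B r * catVec A' B' r)]
  unfold catVec
  simp only [Equiv.symm_apply_apply]
  rw [Fintype.sum_sum_type]
  simp

lemma catVec_sq {d1 d2 : ℕ} (A : Fin d1 → ℝ) (B : Fin d2 → ℝ) :
    ∑ t, catVec A B t ^ 2 = (∑ s, A s ^ 2) + ∑ s, B s ^ 2 := by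
  have := catVec_dot A A B B
  simp only [dotProduct] at this
  simpa [pow_two] using this
end cat

section helpers
variable {ι : Type} [Fintype ι] [DecidableEq ι]

lemma advSet_nonempty (g : (ι → Bool) → Bool) : (advSet g).Nonempty := by
  obtain ⟨d, u, v, c, hu, hv, hc⟩ :=
    pairConstruct (fun y y' => if g y = g y' then (0:ℝ) else 1)
  refine ⟨c, d, u, v, hu, hv, fun y y' => ?_⟩
  rw [hc y y']
  by_cases h : y = y'
  · simp [h]
  · simp [h]

lemma advRelSet_nonneg {K : ℕ} {f : (ι → Bool) → Fin K → Prop} {c : ℝ}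
    (hc : c ∈ advRelSet f) : 0 ≤ c := by
  obtain ⟨d, ψ, φ, σ, hψ, _, _, _⟩ := hc
  exact le_trans (Finset.sum_nonneg fun p _ => Finset.sum_nonneg fun t _ => sq_nonneg _)
    (hψ fun _ => false)

lemma advSet_nonneg {g : (ι → Bool) → Bool} {c : ℝ} (hc : c ∈ advSet g) : 0 ≤ c := by
  obtain ⟨d, u, v, hu, _, _⟩ := hc
  exact le_trans (Finset.sum_nonneg fun p _ => Finset.sum_nonneg fun t _ => sq_nonneg _)
    (hu fun _ => false)

lemma advRelSet_bddBelow {K : ℕ} {f : (ι → Bool) → Fin K → Prop} :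
    BddBelow (advRelSet f) := ⟨0, fun _ hc => advRelSet_nonneg hc⟩

lemma reachTotal {K : ℕ} {h : (ι → Bool) → Fin K → Prop} {c : ℝ}
    (hc : c ∈ advRelSet h) (x : ι → Bool) : ∃ a, h x a := by
  obtain ⟨d, ψ, φ, σ, _, _, hcon, hσ0⟩ := hc
  by_contra hno
  push_neg at hno
  have h0 : ∀ a, σ x a = 0 := fun a => hσ0 x a (hno a)
  have := hcon x x
  rw [Finset.filter_false_of_mem (fun p _ => by simp)] at this
  simp only [Finset.sum_empty] at this
  have hz : ∀ a : Fin K, σ x a ⬝ᵥ σ x a = 0 := fun a => by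
    rw [h0 a]; exact zero_dotProduct _
  rw [Finset.sum_congr rfl fun a _ => hz a] at this
  simp at this

lemma zeroMem {K : ℕ} (h : (ι → Bool) → Fin K → Prop) (a0 : Fin K)
    (ha : ∀ z, h z a0) : (0:ℝ) ∈ advRelSet h := by
  refine ⟨1, (fun _ _ _ => 0), (fun _ _ _ => 0),
    (fun z a t => if a = a0 then 1 else 0), ?_, ?_, ?_, ?_⟩
  · intro z; simp
  · intro z; simp
  · intro z z'
    have h1 : ∀ a : Fin K,
        ((fun t : Fin 1 => if a = a0 then (1:ℝ) else 0) ⬝ᵥ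
         (fun t : Fin 1 => if a = a0 then (1:ℝ) else 0)) = if a = a0 then 1 else 0 := by
      intro a
      by_cases h : a = a0 <;> simp [dotProduct, h]
    rw [Finset.sum_congr rfl fun a _ => h1 a]
    simp [dotProduct]
  · intro z a ha'
    have : a ≠ a0 := fun h => ha' (h ▸ ha z)
    funext t
    simp [this]

lemma totalFeasible {K : ℕ} (f : (ι → Bool) → Fin K → Prop)
    (htot : ∀ z, ∃ a, f z a) : (advRelSet f).Nonempty := by
  classical
  obtain ⟨d1, u, v, c, hu, hv, hc⟩ := pairConstruct (ι := ι) (fun _ _ => (1:ℝ))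
  set e : (ι → Bool) ≃ Fin (Fintype.card (ι → Bool)) := Fintype.equivFin _ with he
  set ch : (ι → Bool) → Fin K := fun z => (htot z).choose with hch
  have hchf : ∀ z, f z (ch z) := fun z => (htot z).choose_spec
  set ind : (ι → Bool) → Fin K → Fin (Fintype.card (ι → Bool)) → ℝ :=
    fun (z : ι → Bool) (a : Fin K) (s : Fin (Fintype.card (ι → Bool))) =>
      if z = e.symm s ∧ a = ch z then (1:ℝ) else 0 with hind
  have hinddot : ∀ (z z' : ι → Bool) (a : Fin K),
      ind z a ⬝ᵥ ind z' a = if z = z' ∧ a = ch z then 1 else 0 := by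
    intro z z' a
    unfold dotProduct
    rw [← Equiv.sum_comp e (fun s => ind z a s * ind z' a s)]
    have hred : ∀ w : ι → Bool, ind z a (e w) * ind z' a (e w)
        = (if z = w ∧ a = ch z then (1:ℝ) else 0) *
          (if z' = w ∧ a = ch z' then (1:ℝ) else 0) := by
      intro w
      rw [hind]
      simp only [Equiv.symm_apply_apply]
    rw [Finset.sum_congr rfl fun w _ => hred w]
    rw [Finset.sum_eq_single z]
    · by_cases hzz : z = z'
      · subst hzz
        by_cases ha : a = ch z <;> simp [ha]
      · have : ¬ (z' = z ∧ a = ch z') := fun hh => hzz hh.1.symm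
        simp [this, hzz]
    · intro w _ hw
      have : ¬ (z = w ∧ a = ch z) := fun hh => hw hh.1.symm
      simp [this]
    · simp
  have hindsum : ∀ z z' : ι → Bool,
      ∑ a, ind z a ⬝ᵥ ind z' a = if z = z' then (1:ℝ) else 0 := by
    intro z z'
    rw [Finset.sum_congr rfl fun a _ => hinddot z z' a]
    by_cases hzz : z = z'
    · simp [hzz]
    · simp [hzz]
  refine ⟨c, d1 + Fintype.card (ι → Bool),
    (fun z p => catVec (u z p) (fun _ => 0)),
    (fun z p => catVec (v z p) (fun _ => 0)),
    (fun z a => catVec (fun _ => 0) (ind z a)), ?_, ?_, ?_, ?_⟩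
  · intro z
    have : ∀ p, ∑ t, catVec (u z p) (fun _ : Fin (Fintype.card (ι → Bool)) => (0:ℝ)) t ^ 2
        = ∑ s, u z p s ^ 2 := by
      intro p; rw [catVec_sq]; simp
    rw [Finset.sum_congr rfl fun p _ => this p]
    exact hu z
  · intro z
    have : ∀ p, ∑ t, catVec (v z p) (fun _ : Fin (Fintype.card (ι → Bool)) => (0:ℝ)) t ^ 2
        = ∑ s, v z p s ^ 2 := by
      intro p; rw [catVec_sq]; simp
    rw [Finset.sum_congr rfl fun p _ => this p]
    exact hv z
  · intro z z'
    have h1 : ∀ p, catVec (u z p) (fun _ : Fin (Fintype.card (ι → Bool)) => (0:ℝ)) ⬝ᵥ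
        catVec (v z' p) (fun _ => (0:ℝ)) = u z p ⬝ᵥ v z' p := by
      intro p; rw [catVec_dot]; simp [dotProduct]
    have h2 : ∀ a, catVec (fun _ : Fin d1 => (0:ℝ)) (ind z a) ⬝ᵥ
        catVec (fun _ => (0:ℝ)) (ind z' a) = ind z a ⬝ᵥ ind z' a := by
      intro a; rw [catVec_dot]; simp [dotProduct]
    rw [Finset.sum_congr rfl fun p _ => h1 p, hc z z',
      Finset.sum_congr rfl fun a _ => h2 a, hindsum z z']
    by_cases hzz : z = z' <;> simp [hzz]
  · intro z a ha
    have hne : a ≠ ch z := fun h => ha (h ▸ hchf z)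
    have hzero : ind z a = 0 := by
      funext s
      rw [hind]
      have : ¬ (z = e.symm s ∧ a = ch z) := fun hh => hne hh.2
      simp [this]
    show catVec (fun _ : Fin d1 => (0:ℝ)) (ind z a) = 0
    rw [hzero]
    funext r
    unfold catVec
    rcases finSumFinEquiv.symm r with s | s <;> simp
end helpers

/-- For a relation `f ⊆ {0,1}^N × [K]` and a Boolean function `g : {0,1}^m → {0,1}`,
`ADV±_rel(f ∘ gᴺ) ≤ ADV±_rel(f) · ADV±(g)`, where the composed relation `h ⊆ {0,1}^{Nm} × [K]`
is given by `((x_1,…,x_N), a) ∈ h` iff `((g x_1, …, g x_N), a) ∈ f`. -/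
theorem stmt15 {N m K : ℕ} (f : (Fin N → Bool) → Fin K → Prop)
    (g : (Fin m → Bool) → Bool) :
    advRel (fun (x : Fin N × Fin m → Bool) (a : Fin K) =>
        f (fun p => g fun q => x (p, q)) a)
      ≤ advRel f * adv g := by
  classical
  set h : (Fin N × Fin m → Bool) → Fin K → Prop :=
    fun x a => f (fun p => g fun q => x (p, q)) a with hh
  have hRh : advRel h = sInf (advRelSet h) := rfl
  have hRf : advRel f = sInf (advRelSet f) := rfl
  have hAdv : adv g = sInf (advSet g) := rfl
  have hT : (advSet g).Nonempty := advSet_nonempty g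
  have hB0 : (0:ℝ) ≤ sInf (advSet g) :=
    Real.sInf_nonneg fun c hc => advSet_nonneg hc
  have hA0 : (0:ℝ) ≤ sInf (advRelSet f) :=
    Real.sInf_nonneg fun c hc => advRelSet_nonneg hc
  rw [hRh, hRf, hAdv]
  by_cases hS : (advRelSet f).Nonempty
  · have key : ∀ ε : ℝ, 0 < ε →
        sInf (advRelSet h) ≤ (sInf (advRelSet f) + ε) * (sInf (advSet g) + ε) := by
      intro ε hε
      obtain ⟨s, hsS, hs⟩ := Real.lt_sInf_add_pos hS hε
      obtain ⟨t, htT, ht⟩ := Real.lt_sInf_add_pos hT hε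
      have hst : s * t ∈ advRelSet h := combineMem f g hsS htT
      have h1 : sInf (advRelSet h) ≤ s * t := csInf_le advRelSet_bddBelow hst
      have hs0 : 0 ≤ s := advRelSet_nonneg hsS
      have ht0 : 0 ≤ t := advSet_nonneg htT
      exact le_trans h1 (mul_le_mul hs.le ht.le ht0 (by linarith))
    have tends : Filter.Tendsto
        (fun ε : ℝ => (sInf (advRelSet f) + ε) * (sInf (advSet g) + ε))
        (nhdsWithin 0 (Set.Ioi 0)) (nhds (sInf (advRelSet f) * sInf (advSet g))) := by
      have hcont : Filter.Tendsto
          (fun ε : ℝ => (sInf (advRelSet f) + ε) * (sInf (advSet g) + ε))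
          (nhds 0) (nhds ((sInf (advRelSet f) + 0) * (sInf (advSet g) + 0))) :=
        ((continuous_const.add continuous_id).mul
          (continuous_const.add continuous_id)).tendsto 0
      rw [add_zero, add_zero] at hcont
      exact hcont.mono_left nhdsWithin_le_nhds
    exact ge_of_tendsto tends
      (Filter.eventually_of_mem self_mem_nhdsWithin fun ε hε => key ε hε)
  · have hSempty : advRelSet f = (∅ : Set ℝ) := Set.not_nonempty_iff_eq_empty.mp hS
    rw [hSempty, Real.sInf_empty, zero_mul]
    by_cases hH : (advRelSet h).Nonempty
    · obtain ⟨c, hcH⟩ := hH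
      by_cases hgs : Function.Surjective g
      · exfalso
        apply hS
        apply totalFeasible
        intro z
        choose sec hsec using hgs
        obtain ⟨a, haa⟩ := reachTotal hcH (fun pq => sec (z pq.1) pq.2)
        refine ⟨a, ?_⟩
        have e1 : (fun p : Fin N => g fun q => sec (z p) q) = z :=
          funext fun p => hsec (z p)
        rw [← e1]
        exact haa
      · have hconst : ∃ b, ∀ y, g y = b := by
          rw [Function.Surjective] at hgs
          push_neg at hgs
          obtain ⟨b0, hb0⟩ := hgs
          refine ⟨!b0, fun y => ?_⟩
          have := hb0 y
          revert this
          cases hgy : g y <;> cases b0 <;> simp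
        obtain ⟨b, hb⟩ := hconst
        obtain ⟨a0, ha0⟩ := reachTotal hcH (fun _ => true)
        have hall : ∀ x : Fin N × Fin m → Bool, h x a0 := by
          intro x
          have e1 : (fun p : Fin N => g fun q => x (p, q))
              = fun p : Fin N => g fun q => (fun _ : Fin N × Fin m => true) (p, q) := by
            funext p; rw [hb, hb]
          show f (fun p => g fun q => x (p, q)) a0
          rw [e1]
          exact ha0
        exact csInf_le advRelSet_bddBelow (zeroMem h a0 hall)
    · rw [Set.not_nonempty_iff_eq_empty.mp hH, Real.sInf_empty]
end

section
/- With the composed vectors α_{x,ℓ} = ψ_{x̃,p} ⊗ u_{x_p,q} and β_{x,ℓ} = φ_{x̃,p} ⊗ v_{x_p,q} (ℓ = (p−1)m+q), for any x, y ∈ {0,1}^{Nm}: Σ_{ℓ: x_ℓ ≠ y_ℓ} ⟨α_{x,ℓ}, β_{y,ℓ}⟩ = Σ_{p: x̃_p ≠ ỹ_p} ⟨ψ_{x̃,p}, φ_{ỹ,p}⟩, where x̃ = (g(x_1),…,g(x_N)). -/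
open Matrix

/-- With composed vectors `α_{x,(p,q)} = ψ_{x̃,p} ⊗ u_{x_p,q}` and
`β_{y,(p,q)} = φ_{ỹ,p} ⊗ v_{y_p,q}` (where `x̃ = (g x_1, …, g x_N)`), and the dual adversary
constraint for `g`, for any inputs `x, y`:
`Σ_{ℓ : x_ℓ ≠ y_ℓ} ⟨α_{x,ℓ}, β_{y,ℓ}⟩ = Σ_{p : x̃_p ≠ ỹ_p} ⟨ψ_{x̃,p}, φ_{ỹ,p}⟩`. -/
theorem stmt17 {N m d₁ d₂ : ℕ} (g : (Fin m → Bool) → Bool)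
    (u v : (Fin m → Bool) → Fin m → (Fin d₂ → ℝ))
    (hg : ∀ y y' : Fin m → Bool,
      (∑ q ∈ Finset.univ.filter fun q => y q ≠ y' q, u y q ⬝ᵥ v y' q)
        = if g y = g y' then 0 else 1)
    (ψ φ : (Fin N → Bool) → Fin N → (Fin d₁ → ℝ))
    (x y : Fin N → (Fin m → Bool)) :
    (∑ p, ∑ q ∈ Finset.univ.filter fun q => x p q ≠ y p q,
        ∑ s, ∑ t, (ψ (fun p' => g (x p')) p s * u (x p) q t) *
          (φ (fun p' => g (y p')) p s * v (y p) q t))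
      = ∑ p ∈ Finset.univ.filter fun p => g (x p) ≠ g (y p),
          ψ (fun p' => g (x p')) p ⬝ᵥ φ (fun p' => g (y p')) p := by
  have key : ∀ p : Fin N,
      (∑ q ∈ Finset.univ.filter fun q => x p q ≠ y p q,
        ∑ s, ∑ t, (ψ (fun p' => g (x p')) p s * u (x p) q t) *
          (φ (fun p' => g (y p')) p s * v (y p) q t))
      = (ψ (fun p' => g (x p')) p ⬝ᵥ φ (fun p' => g (y p')) p) *
        (if g (x p) = g (y p) then 0 else 1) := by
    intro p
    rw [← hg (x p) (y p), Finset.mul_sum, dotProduct]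
    refine Finset.sum_congr rfl fun q _ => ?_
    rw [dotProduct, Finset.sum_mul_sum]
    exact Finset.sum_congr rfl fun s _ => Finset.sum_congr rfl fun t _ => by ring
  simp only [key]
  rw [Finset.sum_filter]
  refine Finset.sum_congr rfl fun p _ => ?_
  by_cases h : g (x p) = g (y p) <;> simp [h]
end
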